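/- Let (α, A) be a representation of order n and (γ, G) a representation of order m of matrix-exponential functions. If there exists an n×m matrix W with γ = α·W, A·W = W·G, and W·𝟙_m = 𝟙_n, then the densities coincide: −α·A·e^{Ax}·𝟙_n = −γ·G·e^{Gx}·𝟙_m for all x ≥ 0. -/

import Mathlib

open Matrix

lemma exp_intertwine {n m : ℕ} (B : Matrix (Fin n) (Fin n) ℝ)
    (C : Matrix (Fin m) (Fin m) ℝ) (W : Matrix (Fin n) (Fin m) ℝ)
    (h : B * W = W * C) :
    NormedSpace.exp B * W = W * NormedSpace.exp C := by
  have hpow : ∀ k : ℕ, B ^ k * W = W * C ^ k := by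
    intro k
    induction k with
    | zero => simp
    | succ k ih =>
      rw [pow_succ, pow_succ, Matrix.mul_assoc, h, ← Matrix.mul_assoc, ih, Matrix.mul_assoc]
  letI : NormedRing (Matrix (Fin n) (Fin n) ℝ) := Matrix.linftyOpNormedRing
  letI : NormedAlgebra ℝ (Matrix (Fin n) (Fin n) ℝ) := Matrix.linftyOpNormedAlgebra
  letI : NormedRing (Matrix (Fin m) (Fin m) ℝ) := Matrix.linftyOpNormedRing
  letI : NormedAlgebra ℝ (Matrix (Fin m) (Fin m) ℝ) := Matrix.linftyOpNormedAlgebra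
  have hsumB : Summable (fun k : ℕ => ((k.factorial :ℝ)⁻¹) • B ^ k) :=
    NormedSpace.expSeries_summable' (𝕂 := ℝ) B
  have hsumC : Summable (fun k : ℕ => ((k.factorial :ℝ)⁻¹) • C ^ k) :=
    NormedSpace.expSeries_summable' (𝕂 := ℝ) C
  let f : Matrix (Fin n) (Fin n) ℝ →ₗ[ℝ] Matrix (Fin n) (Fin m) ℝ :=
    { toFun := fun X => X * W
      map_add' := fun X Y => Matrix.add_mul X Y W
      map_smul' := fun c X => Matrix.smul_mul c X W }
  let g : Matrix (Fin m) (Fin m) ℝ →ₗ[ℝ] Matrix (Fin n) (Fin m) ℝ :=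
    { toFun := fun X => W * X
      map_add' := fun X Y => Matrix.mul_add W X Y
      map_smul' := fun c X => Matrix.mul_smul W c X }
  have hf : Continuous f := f.continuous_of_finiteDimensional
  have hg : Continuous g := g.continuous_of_finiteDimensional
  rw [NormedSpace.exp_eq_tsum (𝕂 := ℝ), NormedSpace.exp_eq_tsum (𝕂 := ℝ)]
  have h1 : (∑' k : ℕ, ((k.factorial :ℝ)⁻¹) • B ^ k) * W
      = ∑' k : ℕ, f (((k.factorial :ℝ)⁻¹) • B ^ k) :=
    (hsumB.hasSum.map f hf).tsum_eq.symm
  have h2 : W * (∑' k : ℕ, ((k.factorial :ℝ)⁻¹) • C ^ k)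
      = ∑' k : ℕ, g (((k.factorial :ℝ)⁻¹) • C ^ k) :=
    (hsumC.hasSum.map g hg).tsum_eq.symm
  rw [h1, h2]
  congr 1
  funext k
  simp only [f, g, LinearMap.coe_mk, AddHom.coe_mk]
  rw [Matrix.smul_mul, Matrix.mul_smul, hpow k]

/-- Representation transformation: if `γ = α W`, `A W = W G` and `W 𝟙 = 𝟙`, then the two
matrix-exponential densities coincide. -/
theorem stmt9 (n m : ℕ) (α : Fin n → ℝ) (A : Matrix (Fin n) (Fin n) ℝ)
    (γ : Fin m → ℝ) (G : Matrix (Fin m) (Fin m) ℝ) (W : Matrix (Fin n) (Fin m) ℝ)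
    (h1 : γ = α ᵥ* W) (h2 : A * W = W * G) (h3 : W *ᵥ (fun _ => 1) = fun _ => 1) :
    ∀ x : ℝ, 0 ≤ x →
      -((α ᵥ* (A * NormedSpace.exp (x • A))) ⬝ᵥ fun _ => 1) =
      -((γ ᵥ* (G * NormedSpace.exp (x • G))) ⬝ᵥ fun _ => 1) := by
  intro x _
  have hx : (x • A) * W = W * (x • G) := by
    rw [Matrix.smul_mul, Matrix.mul_smul, h2]
  have hexp := exp_intertwine (x • A) (x • G) W hx
  have key : (A * NormedSpace.exp (x • A)) * W = W * (G * NormedSpace.exp (x • G)) := by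
    rw [Matrix.mul_assoc, hexp, ← Matrix.mul_assoc, h2, Matrix.mul_assoc]
  rw [← h3, dotProduct_mulVec, vecMul_vecMul, key, ← vecMul_vecMul, ← h1]
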